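/- Let n, k ≥ 1. The map h ↦ ĥ, where ĥ(v,ξ) = h(v,ξ,0), is an isometric Hilbert-space isomorphism from A^{(k)}(ℂ^{2n+1}) onto the Segal–Bargmann space Â^{(k)}(ℂ^{2n}) of holomorphic functions F on ℂ^{2n} with ∫_{ℂ^{2n}} |F(v,ξ)|² (k/π)^{2n} e^{−k(‖v‖²+‖ξ‖²)} dμ(v,ξ) < ∞; its inverse sends F ∈ Â^{(k)}(ℂ^{2n}) to the function (v,ξ,ζ) ↦ F(v,ξ). -/

import Mathlib

open MeasureTheory Complex

noncomputable section

abbrev TwSpace (n : ℕ) := (Fin n → ℂ) × (Fin n → ℂ) × ℂ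

/-- The weighted measure `dμ_k = (k/π)^{2n} e^{-k(‖v‖²+‖ξ‖²)} (π(1+|ζ|²)²)⁻¹ dμ` on `ℂ^{2n+1}`. -/
def twMeasure (n k : ℕ) : Measure (TwSpace n) :=
  volume.withDensity fun p =>
    ENNReal.ofReal (((k : ℝ) / Real.pi) ^ (2 * n) *
      Real.exp (-(k : ℝ) * ((∑ l, Complex.normSq (p.1 l)) + ∑ l, Complex.normSq (p.2.1 l))) *
      (Real.pi * (1 + Complex.normSq p.2.2) ^ 2)⁻¹)

abbrev SBSpace (n : ℕ) := (Fin n → ℂ) × (Fin n → ℂ)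

/-- The Gaussian measure `dν_k = (k/π)^{2n} e^{-k(‖v‖²+‖ξ‖²)} dμ` on `ℂ^{2n}`. -/
def sbMeasure (n k : ℕ) : Measure (SBSpace n) :=
  volume.withDensity fun q =>
    ENNReal.ofReal (((k : ℝ) / Real.pi) ^ (2 * n) *
      Real.exp (-(k : ℝ) * ((∑ l, Complex.normSq (q.1 l)) + ∑ l, Complex.normSq (q.2 l))))


open Metric Set Filter intervalIntegral
open scoped Real


/-- The fiber weight on ℂ. -/
def cw (ζ : ℂ) : ℝ := (Real.pi * (1 + Complex.normSq ζ) ^ 2)⁻¹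

lemma one_add_normSq_pos (ζ : ℂ) : 0 < 1 + Complex.normSq ζ := by
  have := Complex.normSq_nonneg ζ; linarith

lemma cw_pos (ζ : ℂ) : 0 < cw ζ := by
  unfold cw
  have h := one_add_normSq_pos ζ
  have := Real.pi_pos
  positivity

lemma cw_cont : Continuous cw := by
  unfold cw
  apply Continuous.inv₀
  · exact (continuous_const.mul ((continuous_const.add Complex.continuous_normSq).pow 2))
  · intro ζ
    have h := one_add_normSq_pos ζ
    have := Real.pi_pos
    positivity

lemma integrable_cw : Integrable cw := by
  have h4 : ((Module.finrank ℝ ℂ : ℝ)) < 4 := by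
    rw [Complex.finrank_real_complex]; norm_num
  refine ((integrable_one_add_norm (E := ℂ) h4).const_mul (4 / Real.pi)).mono'
    (cw_cont.aestronglyMeasurable) ?_
  filter_upwards with ζ
  rw [Real.norm_of_nonneg (cw_pos ζ).le]
  have hπ := Real.pi_pos
  have hn : (0:ℝ) ≤ ‖ζ‖ := norm_nonneg ζ
  have h1 : (1 + ‖ζ‖) ^ (-(4:ℝ)) = ((1 + ‖ζ‖) ^ (4:ℕ))⁻¹ := by
    rw [Real.rpow_neg (by positivity), show (4:ℝ) = ((4:ℕ):ℝ) by norm_num, Real.rpow_natCast]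
  rw [h1, cw, Complex.normSq_eq_norm_sq]
  rw [show (4:ℝ) / Real.pi * ((1 + ‖ζ‖) ^ (4:ℕ))⁻¹
      = (Real.pi / 4 * (1 + ‖ζ‖) ^ (4:ℕ))⁻¹ by
    field_simp]
  apply inv_anti₀
  · positivity
  · have hpoly : (1 + ‖ζ‖) ^ (4:ℕ) ≤ 4 * (1 + ‖ζ‖ ^ 2) ^ 2 := by
      nlinarith [mul_nonneg (sq_nonneg (1 - ‖ζ‖)) (sq_nonneg (1 + ‖ζ‖)),
        sq_nonneg (1 - ‖ζ‖)]
    calc Real.pi / 4 * (1 + ‖ζ‖) ^ (4:ℕ)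
        ≤ Real.pi / 4 * (4 * (1 + ‖ζ‖ ^ 2) ^ 2) :=
          mul_le_mul_of_nonneg_left hpoly (by positivity)
      _ = Real.pi * (1 + ‖ζ‖ ^ 2) ^ 2 := by ring

def Wrad (r : ℝ) : ℝ := r * (Real.pi * (1 + r ^ 2) ^ 2)⁻¹

lemma Frad_hasDeriv (x : ℝ) :
    HasDerivAt (fun r : ℝ => -(2 * Real.pi)⁻¹ * (1 + r ^ 2)⁻¹) (Wrad x) x := by
  have h1 : HasDerivAt (fun r : ℝ => 1 + r ^ 2) (2 * x) x := by
    simpa using (hasDerivAt_pow 2 x).const_add 1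
  have hne : (1 + x ^ 2) ≠ 0 := by positivity
  have h2 := (h1.inv hne).const_mul (-(2 * Real.pi)⁻¹)
  refine h2.congr_deriv ?_
  unfold Wrad
  have hπ := Real.pi_pos
  field_simp

lemma integrableOn_Wrad : IntegrableOn Wrad (Ioi (0:ℝ)) := by
  refine integrableOn_Ioi_deriv_of_nonneg ?_ (fun x _ => Frad_hasDeriv x) ?_ (l := 0) ?_
  · exact (((continuous_const.mul ((continuous_const.add (continuous_pow 2) : Continuous fun r : ℝ => 1 + r ^ 2).inv₀
      (fun x => (by positivity : (0:ℝ) < 1 + x ^ 2).ne')))).continuousWithinAt)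
  · intro x hx
    have hπ := Real.pi_pos
    have : (0:ℝ) < x := hx
    unfold Wrad; positivity
  · have : Tendsto (fun r : ℝ => (1 + r ^ 2)⁻¹) atTop (nhds 0) := by
      apply Tendsto.inv_tendsto_atTop
      apply tendsto_atTop_add_const_left
      exact tendsto_pow_atTop (by norm_num)
    have := this.const_mul (-(2 * Real.pi)⁻¹)
    simpa using this

lemma integral_Wrad : ∫ r in Ioi (0:ℝ), Wrad r = (2 * Real.pi)⁻¹ := by
  have hπ := Real.pi_pos
  have := integral_Ioi_of_hasDerivAt_of_nonneg (g := fun r : ℝ => -(2 * Real.pi)⁻¹ * (1 + r ^ 2)⁻¹)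
    (g' := Wrad) (a := 0) (l := 0)
    ((((continuous_const.mul ((continuous_const.add (continuous_pow 2) : Continuous fun r : ℝ => 1 + r ^ 2).inv₀
      (fun x => (by positivity : (0:ℝ) < 1 + x ^ 2).ne')))).continuousWithinAt))
    (fun x _ => Frad_hasDeriv x)
    (fun x hx => by
      have : (0:ℝ) < x := hx
      unfold Wrad; positivity)
    (by
      have h : Tendsto (fun r : ℝ => (1 + r ^ 2)⁻¹) atTop (nhds 0) := by
        apply Tendsto.inv_tendsto_atTop
        apply tendsto_atTop_add_const_left
        exact tendsto_pow_atTop (by norm_num)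
      simpa using h.const_mul (-(2 * Real.pi)⁻¹))
  rw [this]
  norm_num

lemma cw_polar (p : ℝ × ℝ) : cw (Complex.polarCoord.symm p) = (Real.pi * (1 + p.1 ^ 2) ^ 2)⁻¹ := by
  unfold cw
  rw [Complex.normSq_eq_norm_sq, Complex.norm_polarCoord_symm, _root_.sq_abs]

lemma integral_cw : ∫ ζ, cw ζ = 1 := by
  have hπ := Real.pi_pos
  rw [← Complex.integral_comp_polarCoord_symm cw]
  have hset : polarCoord.target = Ioi (0:ℝ) ×ˢ Ioo (-Real.pi) Real.pi := rfl
  have hcongr : ∀ p ∈ polarCoord.target,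
      p.1 • cw (Complex.polarCoord.symm p) = Wrad p.1 := by
    intro p _
    rw [smul_eq_mul, cw_polar]; rfl
  rw [setIntegral_congr_fun polarCoord.open_target.measurableSet hcongr, hset]
  have hint : IntegrableOn (fun p : ℝ × ℝ => Wrad p.1)
      (Ioi (0:ℝ) ×ˢ Ioo (-Real.pi) Real.pi) := by
    have h1 : Integrable Wrad (volume.restrict (Ioi (0:ℝ))) := integrableOn_Wrad
    have h2 : Integrable (fun _ : ℝ => (1:ℝ)) (volume.restrict (Ioo (-Real.pi) Real.pi)) := by
      refine integrableOn_const ?_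
      rw [Real.volume_Ioo]
      exact ENNReal.ofReal_ne_top
    have := h1.mul_prod h2
    simpa [IntegrableOn, Measure.prod_restrict, Measure.volume_eq_prod] using this
  rw [Measure.volume_eq_prod, setIntegral_prod _ hint]
  simp only [MeasureTheory.integral_const]
  simp only [Measure.restrict_apply_univ, Real.volume_Ioo, smul_eq_mul]
  have h2π : (volume.restrict (Ioo (-Real.pi) Real.pi)).real univ = 2 * Real.pi := by
    rw [measureReal_def, Measure.restrict_apply_univ, Real.volume_Ioo, ENNReal.toReal_ofReal (by linarith)]; ring
  rw [h2π, MeasureTheory.integral_const_mul, integral_Wrad]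
  field_simp

lemma lintegral_cw : ∫⁻ ζ, ENNReal.ofReal (cw ζ) = 1 := by
  rw [← ofReal_integral_eq_lintegral_ofReal integrable_cw
    (Eventually.of_forall fun ζ => (cw_pos ζ).le), integral_cw, ENNReal.ofReal_one]

section Liouville
variable {f : ℂ → ℂ}

/-- enorm bridge -/
lemma enorm_sq_mul_cw (hf : Continuous f) (ζ : ℂ) :
    (‖(fun z => ‖f z‖ ^ 2 * cw z) ζ‖₊ : ENNReal) = (‖f ζ‖₊ : ENNReal) ^ 2 * ENNReal.ofReal (cw ζ) := by
  have h0 : (0:ℝ) ≤ ‖f ζ‖ ^ 2 * cw ζ := mul_nonneg (by positivity) (cw_pos ζ).le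
  rw [← enorm_eq_nnnorm, Real.enorm_eq_ofReal h0, ENNReal.ofReal_mul (by positivity), ENNReal.ofReal_pow (norm_nonneg _)]
  congr 1
  rw [ofReal_norm, enorm_eq_nnnorm]

lemma integrable_g (hf : Differentiable ℂ f)
    (hint : ∫⁻ ζ, (‖f ζ‖₊ : ENNReal) ^ 2 * ENNReal.ofReal (cw ζ) ≠ ⊤) :
    Integrable (fun ζ => ‖f ζ‖ ^ 2 * cw ζ) := by
  refine ⟨(((hf.continuous.norm).pow 2).mul cw_cont).aestronglyMeasurable, ?_⟩
  rw [hasFiniteIntegral_iff_ofReal (Eventually.of_forall fun ζ =>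
    mul_nonneg (by positivity) (cw_pos ζ).le)]
  calc ∫⁻ ζ, ENNReal.ofReal (‖f ζ‖ ^ 2 * cw ζ)
      = ∫⁻ ζ, (‖f ζ‖₊ : ENNReal) ^ 2 * ENNReal.ofReal (cw ζ) := by
        apply lintegral_congr
        intro ζ
        rw [← enorm_sq_mul_cw hf.continuous ζ, ← enorm_eq_nnnorm,
          Real.enorm_eq_ofReal (mul_nonneg (by positivity) (cw_pos ζ).le)]
    _ < ⊤ := hint.lt_top

lemma tendsto_tail (hf : Differentiable ℂ f)
    (hint : ∫⁻ ζ, (‖f ζ‖₊ : ENNReal) ^ 2 * ENNReal.ofReal (cw ζ) ≠ ⊤) (c : ℂ) :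
    Tendsto (fun m : ℕ => ∫ ζ in {ζ | (m:ℝ) ≤ ‖ζ - c‖}, ‖f ζ‖ ^ 2 * cw ζ)
      atTop (nhds 0) := by
  set g : ℂ → ℝ := fun ζ => ‖f ζ‖ ^ 2 * cw ζ with hg
  have hgi : Integrable g := integrable_g hf hint
  have hmeas : ∀ m : ℕ, MeasurableSet {ζ : ℂ | (m:ℝ) ≤ ‖ζ - c‖} := by
    intro m
    exact isClosed_le continuous_const ((continuous_norm).comp (continuous_id.sub continuous_const)) |>.measurableSet
  have key : ∀ m : ℕ, ∫ ζ in {ζ | (m:ℝ) ≤ ‖ζ - c‖}, g ζ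
      = ∫ ζ, Set.indicator {ζ : ℂ | (m:ℝ) ≤ ‖ζ - c‖} g ζ := by
    intro m; rw [MeasureTheory.integral_indicator (hmeas m)]
  simp_rw [key]
  have : Tendsto (fun m : ℕ => ∫ ζ, Set.indicator {ζ : ℂ | (m:ℝ) ≤ ‖ζ - c‖} g ζ)
      atTop (nhds (∫ _ : ℂ, (0:ℝ))) := by
    apply tendsto_integral_of_dominated_convergence (fun ζ => g ζ) _ hgi
    · intro m
      filter_upwards with ζ
      rw [Real.norm_eq_abs, _root_.abs_of_nonneg (Set.indicator_nonneg (fun z _ => mul_nonneg (by positivity) (cw_pos z).le) ζ)]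
      exact Set.indicator_le_self' (fun z _ => mul_nonneg (by positivity) (cw_pos z).le) ζ
    · filter_upwards with ζ
      obtain ⟨m₀, hm₀⟩ := exists_nat_gt (‖ζ - c‖)
      apply tendsto_const_nhds.congr'
      filter_upwards [eventually_ge_atTop m₀] with m hm
      rw [Set.indicator_of_notMem]
      simp only [Set.mem_setOf_eq, not_le]
      calc ‖ζ - c‖ < m₀ := hm₀
        _ ≤ m := by exact_mod_cast hm
    · intro m
      exact (hgi.aestronglyMeasurable.indicator (hmeas m))
  simpa using this
end Liouville


-- step 1: for entire f, r > 0, δ > 0: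
-- ‖deriv f c‖ ≤ δ/(2r) + (∫ θ in 0..2π, ‖f (circleMap c r θ)‖^2) / (4 π r δ)
lemma deriv_circle_bound {f : ℂ → ℂ} (hf : Differentiable ℂ f) (c : ℂ) {r δ : ℝ}
    (hr : 0 < r) (hδ : 0 < δ) :
    ‖deriv f c‖ ≤ δ / (2 * r) + (∫ θ in (0:ℝ)..(2 * π), ‖f (circleMap c r θ)‖ ^ 2) / (4 * π * r * δ) := by
  have hπ := Real.pi_pos
  have hder : deriv f c = (2 * π * I)⁻¹ • ∮ z in C(c, r), (z - c) ^ (-2:ℤ) • f z := by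
    have h0 := (hf.diffContOnCl (s := Metric.ball c r)).deriv_eq_smul_circleIntegral hr
    have h2 : (2 * π * I : ℂ) ≠ 0 := by simp [Real.pi_ne_zero, Complex.I_ne_zero]
    rw [eq_inv_smul_iff₀ h2, ← h0]
    congr 1
    funext z
    simp [zpow_neg, one_div]
  have hc1 : Continuous fun θ : ℝ => ‖f (circleMap c r θ)‖ :=
    (hf.continuous.comp (continuous_circleMap c r)).norm
  have step1 : ‖deriv f c‖ ≤ (2 * π)⁻¹ * ∫ θ in (0:ℝ)..(2 * π), ‖f (circleMap c r θ)‖ / r := by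
    rw [hder, norm_smul]
    have hnormInv : ‖(2 * (π:ℂ) * Complex.I)⁻¹‖ = (2 * π)⁻¹ := by
      simp [Real.pi_pos.le]
    rw [hnormInv]
    apply mul_le_mul_of_nonneg_left _ (by positivity)
    rw [circleIntegral]
    calc ‖∫ θ in (0:ℝ)..(2 * π), deriv (circleMap c r) θ •
            ((circleMap c r θ - c) ^ (-2:ℤ) • f (circleMap c r θ))‖
        ≤ ∫ θ in (0:ℝ)..(2 * π), ‖deriv (circleMap c r) θ •
            ((circleMap c r θ - c) ^ (-2:ℤ) • f (circleMap c r θ))‖ :=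
          intervalIntegral.norm_integral_le_integral_norm (by positivity)
      _ = ∫ θ in (0:ℝ)..(2 * π), ‖f (circleMap c r θ)‖ / r := by
          apply intervalIntegral.integral_congr
          intro θ _
          dsimp only
          rw [norm_smul, norm_smul, deriv_circleMap, circleMap_sub_center, norm_zpow]
          simp only [norm_mul, Complex.norm_I, mul_one, norm_circleMap_zero]
          rw [_root_.abs_of_pos hr]
          rw [zpow_neg, zpow_two]
          field_simp
  have step2 : ∀ θ : ℝ, ‖f (circleMap c r θ)‖ / r ≤ (δ / 2 + ‖f (circleMap c r θ)‖ ^ 2 / (2 * δ)) / r := by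
    intro θ
    gcongr
    have key : 2 * δ * ‖f (circleMap c r θ)‖ ≤ δ ^ 2 + ‖f (circleMap c r θ)‖ ^ 2 := by
      nlinarith [sq_nonneg (δ - ‖f (circleMap c r θ)‖)]
    rw [div_add_div _ _ two_ne_zero (by positivity : (2:ℝ) * δ ≠ 0),
      le_div_iff₀ (by positivity : (0:ℝ) < 2 * (2 * δ))]
    nlinarith [key]
  have step3 : (∫ θ in (0:ℝ)..(2 * π), ‖f (circleMap c r θ)‖ / r)
      ≤ ∫ θ in (0:ℝ)..(2 * π), (δ / 2 + ‖f (circleMap c r θ)‖ ^ 2 / (2 * δ)) / r := by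
    apply intervalIntegral.integral_mono_on (by positivity)
    · exact ((hc1.div_const r)).intervalIntegrable _ _
    · exact ((((continuous_const.add ((hc1.pow 2).div_const _))).div_const r)).intervalIntegrable _ _
    · intro θ _; exact step2 θ
  have step4 : ∫ θ in (0:ℝ)..(2 * π), (δ / 2 + ‖f (circleMap c r θ)‖ ^ 2 / (2 * δ)) / r
      = π * δ / r + (∫ θ in (0:ℝ)..(2 * π), ‖f (circleMap c r θ)‖ ^ 2) / (2 * δ * r) := by
    have : ∀ θ : ℝ, (δ / 2 + ‖f (circleMap c r θ)‖ ^ 2 / (2 * δ)) / r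
        = δ / (2 * r) + ‖f (circleMap c r θ)‖ ^ 2 * (2 * δ * r)⁻¹ := by
      intro θ; field_simp
    rw [intervalIntegral.integral_congr (fun θ _ => this θ)]
    rw [intervalIntegral.integral_add (g := fun θ => ‖f (circleMap c r θ)‖ ^ 2 * (2 * δ * r)⁻¹) (intervalIntegrable_const)
      ((((hc1.pow 2).mul continuous_const : Continuous fun θ => ‖f (circleMap c r θ)‖ ^ 2 * (2 * δ * r)⁻¹)).intervalIntegrable _ _)]
    rw [intervalIntegral.integral_const, intervalIntegral.integral_mul_const]
    rw [smul_eq_mul]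
    field_simp
    ring
  calc ‖deriv f c‖ ≤ (2 * π)⁻¹ * ∫ θ in (0:ℝ)..(2 * π), ‖f (circleMap c r θ)‖ / r := step1
    _ ≤ (2 * π)⁻¹ * (π * δ / r + (∫ θ in (0:ℝ)..(2 * π), ‖f (circleMap c r θ)‖ ^ 2) / (2 * δ * r)) := by
        rw [← step4]
        exact mul_le_mul_of_nonneg_left step3 (by positivity)
    _ = δ / (2 * r) + (∫ θ in (0:ℝ)..(2 * π), ‖f (circleMap c r θ)‖ ^ 2) / (4 * π * r * δ) := by
        field_simp
        ring

lemma circleMap_cont (c : ℂ) : Continuous fun p : ℝ × ℝ => circleMap c p.1 p.2 := by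
  unfold circleMap
  fun_prop

lemma add_polar_eq_circleMap (c : ℂ) (p : ℝ × ℝ) :
    c + Complex.polarCoord.symm p = circleMap c p.1 p.2 := by
  rw [Complex.polarCoord_symm_apply, circleMap, Complex.exp_mul_I]
  norm_num [Complex.ofReal_cos, Complex.ofReal_sin]

theorem key_estimate {f : ℂ → ℂ} (hf : Differentiable ℂ f)
    (hgi : Integrable (fun ζ => ‖f ζ‖ ^ 2 * cw ζ)) (c : ℂ) {R δ : ℝ}
    (hR : 0 < R) (hδ : 0 < δ) :
    R * (R * (4 * π * R * δ * ‖deriv f c‖ - 2 * π * δ ^ 2))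
      ≤ π * (1 + (‖c‖ + 2 * R) ^ 2) ^ 2
        * ∫ ζ in {ζ | R ≤ ‖ζ - c‖}, ‖f ζ‖ ^ 2 * cw ζ := by
  have hπ := Real.pi_pos
  set s : Set ℝ := Ioc R (2 * R) with hs
  set t : Set ℝ := Ioo (-π) π with ht
  set P : ℝ × ℝ → ℝ := fun p => ‖f (circleMap c p.1 p.2)‖ ^ 2 with hP
  have hPc : Continuous P := ((hf.continuous.comp (circleMap_cont c)).norm.pow 2)
  have hPnn : ∀ p, 0 ≤ P p := fun p => by positivity
  -- integrability on the rectangle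
  have hsub : s ×ˢ t ⊆ Icc R (2 * R) ×ˢ Icc (-π) π :=
    Set.prod_mono Ioc_subset_Icc_self Ioo_subset_Icc_self
  have hPint : IntegrableOn P (s ×ˢ t) :=
    (hPc.continuousOn.integrableOn_compact (isCompact_Icc.prod isCompact_Icc)).mono_set hsub
  have hP1int : IntegrableOn (fun p : ℝ × ℝ => p.1 * P p) (s ×ˢ t) :=
    (((continuous_fst.mul hPc)).continuousOn.integrableOn_compact
      (isCompact_Icc.prod isCompact_Icc)).mono_set hsub
  have hmeas_st : MeasurableSet (s ×ˢ t) := measurableSet_Ioc.prod measurableSet_Ioo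
  -- Φ̃
  set Φ : ℝ → ℝ := fun r => ∫ θ in t, P (r, θ) with hΦ
  have hΦnn : ∀ r, 0 ≤ Φ r := fun r => setIntegral_nonneg measurableSet_Ioo fun θ _ => hPnn _
  have hΦint : IntegrableOn Φ s := by
    have h1 : Integrable P ((volume.restrict s).prod (volume.restrict t)) := by
      rw [Measure.prod_restrict, ← Measure.volume_eq_prod]
      exact hPint
    exact h1.integral_prod_left
  have hrΦint : IntegrableOn (fun r => r * Φ r) s := by
    have h1 : Integrable (fun p : ℝ × ℝ => p.1 * P p)
        ((volume.restrict s).prod (volume.restrict t)) := by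
      rw [Measure.prod_restrict, ← Measure.volume_eq_prod]
      exact hP1int
    have h2 := h1.integral_prod_left
    apply h2.congr
    filter_upwards with r
    exact MeasureTheory.integral_const_mul r _
  -- Φ equals the circle integral in the deriv bound
  have hΦeq : ∀ r : ℝ, Φ r = ∫ θ in (0:ℝ)..(2 * π), ‖f (circleMap c r θ)‖ ^ 2 := by
    intro r
    have hper : Function.Periodic (fun θ : ℝ => ‖f (circleMap c r θ)‖ ^ 2) (2 * π) :=
      (periodic_circleMap c r).comp fun z => ‖f z‖ ^ 2
    have h1 := hper.intervalIntegral_add_eq (-π) 0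
    have h2 : -π + 2 * π = π := by ring
    rw [h2, zero_add] at h1
    calc Φ r = ∫ θ in Ioo (-π) π, ‖f (circleMap c r θ)‖ ^ 2 := rfl
      _ = ∫ θ in Ioc (-π) π, ‖f (circleMap c r θ)‖ ^ 2 := integral_Ioc_eq_integral_Ioo.symm
      _ = ∫ θ in (-π)..π, ‖f (circleMap c r θ)‖ ^ 2 :=
          (intervalIntegral.integral_of_le (by linarith : -π ≤ π)).symm
      _ = _ := h1
  -- Step L1 : pointwise lower bound on Φ
  have L1 : ∀ r ∈ s, 4 * π * R * δ * ‖deriv f c‖ - 2 * π * δ ^ 2 ≤ Φ r := by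
    intro r hr
    have hrR : R < r := hr.1
    have hr0 : 0 < r := hR.trans hrR
    have hb := deriv_circle_bound hf c hr0 hδ
    rw [← hΦeq r] at hb
    have h1 := mul_le_mul_of_nonneg_left hb (by positivity : (0:ℝ) ≤ 4 * π * r * δ)
    have h2 : 4 * π * r * δ * (δ / (2 * r) + Φ r / (4 * π * r * δ)) = 2 * π * δ ^ 2 + Φ r := by
      field_simp
      ring
    rw [h2] at h1
    nlinarith [norm_nonneg (deriv f c), mul_le_mul_of_nonneg_right hrR.le
      (by positivity : (0:ℝ) ≤ 4 * π * δ * ‖deriv f c‖)]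
  -- Step L2 : integrate over s
  have L2 : R * (4 * π * R * δ * ‖deriv f c‖ - 2 * π * δ ^ 2) ≤ ∫ r in s, Φ r := by
    have h1 : ∫ _r in s, (4 * π * R * δ * ‖deriv f c‖ - 2 * π * δ ^ 2)
        = R * (4 * π * R * δ * ‖deriv f c‖ - 2 * π * δ ^ 2) := by
      rw [setIntegral_const, hs, measureReal_def, Real.volume_Ioc, smul_eq_mul,
        ENNReal.toReal_ofReal (by linarith)]
      ring_nf
    rw [← h1]
    apply setIntegral_mono_on (integrableOn_const (by
      rw [hs, Real.volume_Ioc]; exact ENNReal.ofReal_ne_top)) hΦint measurableSet_Ioc L1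
  -- Step L3 : R * ∫ Φ ≤ ∫ r Φ
  have L3 : R * ∫ r in s, Φ r ≤ ∫ r in s, r * Φ r := by
    rw [← MeasureTheory.integral_const_mul]
    apply setIntegral_mono_on (hΦint.const_mul R) hrΦint measurableSet_Ioc
    intro r hr
    exact mul_le_mul_of_nonneg_right hr.1.le (hΦnn r)
  -- Step L4 : ∫_s r Φ r = U
  have L4 : ∫ r in s, r * Φ r = ∫ p in s ×ˢ t, p.1 * P p := by
    rw [Measure.volume_eq_prod, setIntegral_prod _ hP1int]
    apply setIntegral_congr_fun measurableSet_Ioc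
    intro r _
    exact (MeasureTheory.integral_const_mul r _).symm
  -- Step L5 : polar coordinates + translation
  set annC : Set ℂ := {ζ : ℂ | ‖ζ - c‖ ∈ s} with hannC
  have hannC_meas : MeasurableSet annC := by
    have hcont : Continuous fun ζ : ℂ => ‖ζ - c‖ :=
      continuous_norm.comp (continuous_id.sub continuous_const)
    exact measurableSet_Ioc.preimage hcont.measurable
  set gA : ℂ → ℝ := fun ζ =>
    Set.indicator {ζ : ℂ | ‖ζ‖ ∈ s} (fun ζ => ‖f (c + ζ)‖ ^ 2) ζ with hgA
  have hsub_target : s ×ˢ t ⊆ polarCoord.target := by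
    rintro ⟨r, θ⟩ ⟨hr, hθ⟩
    rw [polarCoord_target]
    exact ⟨hR.trans hr.1, hθ⟩
  have hL5a : ∫ p in s ×ˢ t, p.1 * P p
      = ∫ p in polarCoord.target, (s ×ˢ t).indicator (fun p : ℝ × ℝ => p.1 * P p) p := by
    rw [setIntegral_indicator hmeas_st, Set.inter_eq_self_of_subset_right hsub_target]
  have hL5b : ∫ p in polarCoord.target, (s ×ˢ t).indicator (fun p : ℝ × ℝ => p.1 * P p) p
      = ∫ p in polarCoord.target, p.1 • gA (Complex.polarCoord.symm p) := by
    apply setIntegral_congr_fun polarCoord.open_target.measurableSet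
    intro p hp
    rw [polarCoord_target] at hp
    obtain ⟨hp1, hp2⟩ := hp
    have habs : ‖Complex.polarCoord.symm p‖ = p.1 := by
      rw [Complex.norm_polarCoord_symm, _root_.abs_of_pos hp1]
    show (s ×ˢ t).indicator (fun p : ℝ × ℝ => p.1 * P p) p
        = p.1 • gA (Complex.polarCoord.symm p)
    by_cases hmem : p.1 ∈ s
    · rw [Set.indicator_of_mem (Set.mem_prod.2 ⟨hmem, hp2⟩)]
      have hgmem : Complex.polarCoord.symm p ∈ {ζ : ℂ | ‖ζ‖ ∈ s} := by
        rw [Set.mem_setOf_eq, habs]; exact hmem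
      have heq : gA (Complex.polarCoord.symm p) = ‖f (c + Complex.polarCoord.symm p)‖ ^ 2 :=
        Set.indicator_of_mem hgmem _
      rw [heq, add_polar_eq_circleMap, smul_eq_mul]
    · have hnm : p ∉ s ×ˢ t := fun hc => hmem hc.1
      have heq : gA (Complex.polarCoord.symm p) = 0 :=
        Set.indicator_of_notMem (by rw [Set.mem_setOf_eq, habs]; exact hmem) _
      rw [Set.indicator_of_notMem hnm, heq, smul_zero]
  have hL5c : ∫ p in polarCoord.target, p.1 • gA (Complex.polarCoord.symm p) = ∫ ζ, gA ζ :=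
    Complex.integral_comp_polarCoord_symm gA
  have hL5d : ∫ ζ, gA ζ = ∫ ζ in annC, ‖f ζ‖ ^ 2 := by
    have hpt : ∀ ζ : ℂ, gA ζ = Set.indicator annC (fun ζ => ‖f ζ‖ ^ 2) (c + ζ) := by
      intro ζ
      rw [hgA, hannC]
      simp only [Set.indicator_apply, Set.mem_setOf_eq, add_sub_cancel_left]
    simp_rw [hpt]
    rw [integral_add_left_eq_self (Set.indicator annC fun ζ => ‖f ζ‖ ^ 2) c,
      MeasureTheory.integral_indicator hannC_meas]
  -- Step L6 : compare with weighted integral and tail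
  set C' : ℝ := π * (1 + (‖c‖ + 2 * R) ^ 2) ^ 2 with hC'
  have hC'pos : 0 < C' := by
    have := norm_nonneg c
    positivity
  have hfint_ann : IntegrableOn (fun ζ => ‖f ζ‖ ^ 2) annC := by
    have h1 : IntegrableOn (fun ζ => ‖f ζ‖ ^ 2) (closedBall c (2 * R)) :=
      ((hf.continuous.norm.pow 2).continuousOn).integrableOn_compact (isCompact_closedBall c _)
    apply h1.mono_set
    intro ζ hζ
    rw [mem_closedBall, Complex.dist_eq]
    exact hζ.2
  have hL6a : ∫ ζ in annC, ‖f ζ‖ ^ 2 ≤ ∫ ζ in annC, C' * (‖f ζ‖ ^ 2 * cw ζ) := by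
    apply setIntegral_mono_on hfint_ann ((hgi.const_mul C').integrableOn) hannC_meas
    intro ζ hζ
    have habs2 : ‖ζ‖ ≤ ‖c‖ + 2 * R := by
      calc ‖ζ‖ = ‖c + (ζ - c)‖ := by ring_nf
        _ ≤ ‖c‖ + ‖ζ - c‖ := norm_add_le _ _
        _ ≤ ‖c‖ + 2 * R := by
            have := hζ.2
            linarith
    have hcwb : π * (1 + Complex.normSq ζ) ^ 2 ≤ C' := by
      have h1 : Complex.normSq ζ ≤ (‖c‖ + 2 * R) ^ 2 := by
        rw [Complex.normSq_eq_norm_sq]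
        exact pow_le_pow_left₀ (norm_nonneg ζ) habs2 2
      have h2 := Complex.normSq_nonneg ζ
      rw [hC']
      have h3 : 1 + Complex.normSq ζ ≤ 1 + (‖c‖ + 2 * R) ^ 2 := by linarith
      have h4 : (1 + Complex.normSq ζ) ^ 2 ≤ (1 + (‖c‖ + 2 * R) ^ 2) ^ 2 :=
        pow_le_pow_left₀ (by linarith) h3 2
      exact mul_le_mul_of_nonneg_left h4 hπ.le
    have h1C : 1 ≤ C' * cw ζ := by
      unfold cw
      rw [← div_eq_mul_inv]
      refine (one_le_div ?_).2 hcwb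
      have := one_add_normSq_pos ζ
      positivity
    calc ‖f ζ‖ ^ 2 = ‖f ζ‖ ^ 2 * 1 := (mul_one _).symm
      _ ≤ ‖f ζ‖ ^ 2 * (C' * cw ζ) := mul_le_mul_of_nonneg_left h1C (by positivity)
      _ = C' * (‖f ζ‖ ^ 2 * cw ζ) := by ring
  have hL6b : ∫ ζ in annC, C' * (‖f ζ‖ ^ 2 * cw ζ)
      ≤ C' * ∫ ζ in {ζ : ℂ | R ≤ ‖ζ - c‖}, ‖f ζ‖ ^ 2 * cw ζ := by
    rw [MeasureTheory.integral_const_mul]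
    apply mul_le_mul_of_nonneg_left _ hC'pos.le
    apply setIntegral_mono_set hgi.integrableOn
      (Eventually.of_forall fun ζ => mul_nonneg (by positivity) (cw_pos ζ).le)
    apply HasSubset.Subset.eventuallyLE
    intro ζ hζ
    exact hζ.1.le
  -- combine everything
  calc R * (R * (4 * π * R * δ * ‖deriv f c‖ - 2 * π * δ ^ 2))
      ≤ R * ∫ r in s, Φ r := mul_le_mul_of_nonneg_left L2 hR.le
    _ ≤ ∫ r in s, r * Φ r := L3
    _ = ∫ p in s ×ˢ t, p.1 * P p := L4
    _ = ∫ ζ in annC, ‖f ζ‖ ^ 2 := by rw [hL5a, hL5b, hL5c, hL5d]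
    _ ≤ ∫ ζ in annC, C' * (‖f ζ‖ ^ 2 * cw ζ) := hL6a
    _ ≤ C' * ∫ ζ in {ζ : ℂ | R ≤ ‖ζ - c‖}, ‖f ζ‖ ^ 2 * cw ζ := hL6b

theorem liouville_L2 {f : ℂ → ℂ} (hf : Differentiable ℂ f)
    (hint : ∫⁻ ζ, (‖f ζ‖₊ : ENNReal) ^ 2 * ENNReal.ofReal (cw ζ) ≠ ⊤) (z : ℂ) :
    f z = f 0 := by
  have hπ := Real.pi_pos
  suffices hd : ∀ c, deriv f c = 0 by exact is_const_of_deriv_eq_zero hf hd z 0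
  intro c
  have hgi := integrable_g hf hint
  have htail := tendsto_tail hf hint c
  rw [← norm_le_zero_iff]
  refine le_of_forall_gt_imp_ge_of_dense fun ε ε₀ => ?_
  obtain ⟨m, hm1, hm2⟩ := ((htail.eventually_lt_const (by positivity : (0:ℝ) < ε ^ 2 / 50)).and
    (eventually_ge_atTop (max 1 ⌈‖c‖⌉₊))).exists
  set R : ℝ := (m : ℝ) with hRdef
  have hR1 : (1:ℝ) ≤ R := by
    have h : (1:ℕ) ≤ m := le_trans (le_max_left _ _) hm2
    rw [hRdef]
    exact_mod_cast h
  have hRc : ‖c‖ ≤ R := by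
    have : ⌈‖c‖⌉₊ ≤ m := le_trans (le_max_right _ _) hm2
    exact Nat.ceil_le.1 this
  have hR0 : (0:ℝ) < R := lt_of_lt_of_le one_pos hR1
  have hδ0 : (0:ℝ) < ε * R := by positivity
  have hkey := key_estimate hf hgi c hR0 hδ0
  set T : ℝ := ∫ ζ in {ζ | R ≤ ‖ζ - c‖}, ‖f ζ‖ ^ 2 * cw ζ with hT
  have hC'le : π * (1 + (‖c‖ + 2 * R) ^ 2) ^ 2 ≤ 100 * π * R ^ 4 := by
    have h1 : ‖c‖ + 2 * R ≤ 3 * R := by linarith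
    have h2 : (‖c‖ + 2 * R) ^ 2 ≤ 9 * R ^ 2 := by
      nlinarith [norm_nonneg c]
    have h3 : 1 + (‖c‖ + 2 * R) ^ 2 ≤ 10 * R ^ 2 := by nlinarith
    have h4 : (1 + (‖c‖ + 2 * R) ^ 2) ^ 2 ≤ 100 * R ^ 4 := by
      nlinarith [sq_nonneg (‖c‖ + 2 * R)]
    nlinarith
  have hfinal : R * (R * (4 * π * R * (ε * R) * ‖deriv f c‖ - 2 * π * (ε * R) ^ 2))
      ≤ 2 * π * R ^ 4 * ε ^ 2 := by
    calc R * (R * (4 * π * R * (ε * R) * ‖deriv f c‖ - 2 * π * (ε * R) ^ 2))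
        ≤ π * (1 + (‖c‖ + 2 * R) ^ 2) ^ 2 * T := hkey
      _ ≤ π * (1 + (‖c‖ + 2 * R) ^ 2) ^ 2 * (ε ^ 2 / 50) := by
          apply mul_le_mul_of_nonneg_left hm1.le
          positivity
      _ ≤ 100 * π * R ^ 4 * (ε ^ 2 / 50) := by
          apply mul_le_mul_of_nonneg_right hC'le (by positivity)
      _ = 2 * π * R ^ 4 * ε ^ 2 := by ring
  have h5 : (4 * π * R ^ 4 * ε) * ‖deriv f c‖ ≤ (4 * π * R ^ 4 * ε) * ε := by
    nlinarith [hfinal]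
  exact le_of_mul_le_mul_left h5 (by positivity)

-- bridging lemmas
lemma memLp_two_iff_lintegral {α : Type*} [MeasurableSpace α] {μ : Measure α} {h : α → ℂ}
    (hm : AEStronglyMeasurable h μ) :
    MemLp h 2 μ ↔ ∫⁻ a, (‖h a‖₊ : ENNReal) ^ 2 ∂μ < ⊤ := by
  have hconv : ∀ a, (‖h a‖ₑ) ^ ((2:ENNReal).toReal) = (‖h a‖₊ : ENNReal) ^ (2:ℕ) := by
    intro a
    rw [show ((2:ENNReal).toReal) = ((2:ℕ):ℝ) by norm_num, ENNReal.rpow_natCast, enorm_eq_nnnorm]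
  constructor
  · intro hh
    have h1 := (eLpNorm_lt_top_iff_lintegral_rpow_enorm_lt_top (f := h) (p := 2) two_ne_zero
      ENNReal.ofNat_ne_top).1 hh.2
    rwa [lintegral_congr hconv] at h1
  · intro hh
    refine ⟨hm, ?_⟩
    rw [eLpNorm_lt_top_iff_lintegral_rpow_enorm_lt_top two_ne_zero ENNReal.ofNat_ne_top,
      lintegral_congr hconv]
    exact hh

lemma integral_norm_sq_eq_lintegral {α : Type*} [MeasurableSpace α] {μ : Measure α} {h : α → ℂ}
    (hm : AEStronglyMeasurable h μ) :
    ∫ a, ‖h a‖ ^ 2 ∂μ = (∫⁻ a, (‖h a‖₊ : ENNReal) ^ 2 ∂μ).toReal := by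
  rw [integral_eq_lintegral_of_nonneg_ae (Eventually.of_forall fun a => by positivity)
    ((hm.norm.aemeasurable.pow_const 2).aestronglyMeasurable)]
  congr 1
  apply lintegral_congr
  intro a
  rw [ENNReal.ofReal_pow (norm_nonneg _), ofReal_norm, enorm_eq_nnnorm]

def rhof (n k : ℕ) : SBSpace n → ℝ := fun q =>
  ((k : ℝ) / Real.pi) ^ (2 * n) *
    Real.exp (-(k : ℝ) * ((∑ l, Complex.normSq (q.1 l)) + ∑ l, Complex.normSq (q.2 l)))

lemma rhof_cont (n k : ℕ) : Continuous (rhof n k) := by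
  apply continuous_const.mul
  apply Real.continuous_exp.comp
  apply continuous_const.mul
  apply Continuous.add
  · exact continuous_finset_sum _ fun l _ =>
      Complex.continuous_normSq.comp ((continuous_apply l).comp continuous_fst)
  · exact continuous_finset_sum _ fun l _ =>
      Complex.continuous_normSq.comp ((continuous_apply l).comp continuous_snd)

lemma rhof_pos (n k : ℕ) (hk : 1 ≤ k) (q : SBSpace n) : 0 < rhof n k q := by
  unfold rhof
  apply mul_pos _ (Real.exp_pos _)
  apply pow_pos
  apply div_pos _ Real.pi_pos
  exact_mod_cast Nat.lt_of_lt_of_le Nat.zero_lt_one hk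

lemma twMeasure_eq (n k : ℕ) : twMeasure n k
    = volume.withDensity fun p : TwSpace n =>
        ENNReal.ofReal (rhof n k (p.1, p.2.1) * cw p.2.2) := rfl

lemma sbMeasure_eq (n k : ℕ) : sbMeasure n k
    = volume.withDensity fun q : SBSpace n => ENNReal.ofReal (rhof n k q) := rfl

section Fact
variable (n k : ℕ)

lemma proj_meas : Measurable fun p : TwSpace n => (p.1, p.2.1) :=
  measurable_fst.prodMk (measurable_fst.comp measurable_snd)

lemma Dtw_split (p : TwSpace n) : ENNReal.ofReal (rhof n k (p.1, p.2.1) * cw p.2.2)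
    = ENNReal.ofReal (rhof n k (p.1, p.2.1)) * ENNReal.ofReal (cw p.2.2) :=
  ENNReal.ofReal_mul (by
    unfold rhof
    positivity)

lemma Dtw_meas : Measurable fun p : TwSpace n =>
    ENNReal.ofReal (rhof n k (p.1, p.2.1) * cw p.2.2) := by
  simp_rw [Dtw_split]
  exact (((rhof_cont n k).measurable.ennreal_ofReal).comp (proj_meas n)).mul
    ((cw_cont.measurable.ennreal_ofReal).comp (measurable_snd.comp measurable_snd))

/-- Key factorization: lintegral over `twMeasure` of a function of `(v, ξ)` only. -/
lemma lintegral_tw {G : SBSpace n → ENNReal} (hG : Measurable G) :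
    ∫⁻ p, G (p.1, p.2.1) ∂(twMeasure n k) = ∫⁻ q, G q ∂(sbMeasure n k) := by
  have hcwm : Measurable fun ζ : ℂ => ENNReal.ofReal (cw ζ) := cw_cont.measurable.ennreal_ofReal
  have hρm : Measurable fun q : SBSpace n => ENNReal.ofReal (rhof n k q) :=
    (rhof_cont n k).measurable.ennreal_ofReal
  have hGp : Measurable fun p : TwSpace n => G (p.1, p.2.1) := hG.comp (proj_meas n)
  rw [twMeasure_eq, lintegral_withDensity_eq_lintegral_mul _ (Dtw_meas n k) hGp,
    sbMeasure_eq, lintegral_withDensity_eq_lintegral_mul _ hρm hG]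
  have hIm : Measurable fun p : TwSpace n =>
      (ENNReal.ofReal (rhof n k (p.1, p.2.1)) * G (p.1, p.2.1)) * ENNReal.ofReal (cw p.2.2) :=
    ((hρm.comp (proj_meas n)).mul (hG.comp (proj_meas n))).mul
      (hcwm.comp (measurable_snd.comp measurable_snd))
  calc ∫⁻ p, ((fun p : TwSpace n => ENNReal.ofReal (rhof n k (p.1, p.2.1) * cw p.2.2)) *
        fun p : TwSpace n => G (p.1, p.2.1)) p ∂volume
      = ∫⁻ p : TwSpace n, (ENNReal.ofReal (rhof n k (p.1, p.2.1)) * G (p.1, p.2.1))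
          * ENNReal.ofReal (cw p.2.2) ∂volume := by
        apply lintegral_congr
        intro p
        rw [Pi.mul_apply, Dtw_split]
        ring
    _ = ∫⁻ v, ∫⁻ w : (Fin n → ℂ) × ℂ, (ENNReal.ofReal (rhof n k (v, w.1)) * G (v, w.1))
          * ENNReal.ofReal (cw w.2) ∂volume ∂volume := by
        rw [Measure.volume_eq_prod, lintegral_prod _ hIm.aemeasurable]
    _ = ∫⁻ v, ∫⁻ ξ, ENNReal.ofReal (rhof n k (v, ξ)) * G (v, ξ) ∂volume ∂volume := by
        apply lintegral_congr
        intro v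
        have hIm2 : Measurable fun w : (Fin n → ℂ) × ℂ =>
            (ENNReal.ofReal (rhof n k (v, w.1)) * G (v, w.1)) * ENNReal.ofReal (cw w.2) := by
          have hm1 : Measurable fun w : (Fin n → ℂ) × ℂ => (v, w.1) :=
            measurable_const.prodMk measurable_fst
          exact ((hρm.comp hm1).mul (hG.comp hm1)).mul (hcwm.comp measurable_snd)
        rw [Measure.volume_eq_prod, lintegral_prod _ hIm2.aemeasurable]
        apply lintegral_congr
        intro ξ
        show (∫⁻ ζ : ℂ, ENNReal.ofReal (rhof n k (v, ξ)) * G (v, ξ)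
            * ENNReal.ofReal (cw ζ) ∂volume) = _
        rw [lintegral_const_mul _ hcwm, lintegral_cw, mul_one]
    _ = ∫⁻ q : SBSpace n, ENNReal.ofReal (rhof n k q) * G q ∂volume := by
        rw [Measure.volume_eq_prod, lintegral_prod (fun q : SBSpace n => ENNReal.ofReal (rhof n k q) * G q)
          ((hρm.mul hG)).aemeasurable]
    _ = ∫⁻ q, ((fun q : SBSpace n => ENNReal.ofReal (rhof n k q)) * G) q ∂volume := by
        apply lintegral_congr
        intro q
        rw [Pi.mul_apply]
end Fact


/-- The map `h ↦ ĥ`, `ĥ(v,ξ) = h(v,ξ,0)`, is an isometric isomorphism from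
`A^{(k)}(ℂ^{2n+1})` onto the Segal–Bargmann space `Â^{(k)}(ℂ^{2n})` of Gaussian-square-integrable
holomorphic functions on `ℂ^{2n}`; its inverse sends `F` to the function `(v,ξ,ζ) ↦ F(v,ξ)`. -/
theorem bergman_iso_segalBargmann (n k : ℕ) (hn : 1 ≤ n) (hk : 1 ≤ k) :
    (∀ h : TwSpace n → ℂ, Differentiable ℂ h → MemLp h 2 (twMeasure n k) →
      Differentiable ℂ (fun q : SBSpace n => h (q.1, q.2, 0)) ∧
      MemLp (fun q : SBSpace n => h (q.1, q.2, 0)) 2 (sbMeasure n k) ∧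
      ∫ q, ‖h (q.1, q.2, 0)‖ ^ 2 ∂(sbMeasure n k) = ∫ p, ‖h p‖ ^ 2 ∂(twMeasure n k)) ∧
    (∀ F : SBSpace n → ℂ, Differentiable ℂ F → MemLp F 2 (sbMeasure n k) →
      Differentiable ℂ (fun p : TwSpace n => F (p.1, p.2.1)) ∧
      MemLp (fun p : TwSpace n => F (p.1, p.2.1)) 2 (twMeasure n k) ∧
      ∫ p, ‖F (p.1, p.2.1)‖ ^ 2 ∂(twMeasure n k) = ∫ q, ‖F q‖ ^ 2 ∂(sbMeasure n k)) ∧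
    (∀ h : TwSpace n → ℂ, Differentiable ℂ h → MemLp h 2 (twMeasure n k) →
      ∀ p : TwSpace n, h (p.1, p.2.1, 0) = h p) ∧
    (∀ F : SBSpace n → ℂ, ∀ q : SBSpace n, F ((q.1, q.2, (0:ℂ)).1, (q.1, q.2, (0:ℂ)).2.1) = F q) := by
  have part3 : ∀ h : TwSpace n → ℂ, Differentiable ℂ h → MemLp h 2 (twMeasure n k) →
      ∀ (v ξ : Fin n → ℂ) (ζ : ℂ), h (v, ξ, ζ) = h (v, ξ, 0) := by
    intro h hdiff hmem
    have hc : Continuous h := hdiff.continuous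
    have hWm : Measurable fun p : TwSpace n => (‖h p‖₊ : ENNReal) ^ 2 :=
      (hc.measurable.nnnorm.coe_nnreal_ennreal).pow_const 2
    have hfin0 : ∫⁻ p, (‖h p‖₊ : ENNReal) ^ 2 ∂(twMeasure n k) < ⊤ :=
      (memLp_two_iff_lintegral hmem.1).1 hmem
    rw [twMeasure_eq, lintegral_withDensity_eq_lintegral_mul _ (Dtw_meas n k) hWm] at hfin0
    have hFm : Measurable fun p : TwSpace n =>
        ENNReal.ofReal (rhof n k (p.1, p.2.1)) *
          (ENNReal.ofReal (cw p.2.2) * (‖h p‖₊ : ENNReal) ^ 2) := by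
      have h1 : Measurable fun p : TwSpace n => ENNReal.ofReal (rhof n k (p.1, p.2.1)) :=
        ((rhof_cont n k).measurable.ennreal_ofReal).comp
          (measurable_fst.prodMk (measurable_fst.comp measurable_snd))
      have h2 : Measurable fun p : TwSpace n => ENNReal.ofReal (cw p.2.2) :=
        (cw_cont.measurable.ennreal_ofReal).comp (measurable_snd.comp measurable_snd)
      exact h1.mul (h2.mul hWm)
    have hfin : ∫⁻ p : TwSpace n, ENNReal.ofReal (rhof n k (p.1, p.2.1)) *
        (ENNReal.ofReal (cw p.2.2) * (‖h p‖₊ : ENNReal) ^ 2) ∂volume < ⊤ := by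
      refine lt_of_eq_of_lt ?_ hfin0
      apply lintegral_congr
      intro p
      rw [Pi.mul_apply, Dtw_split]
      ring
    rw [Measure.volume_eq_prod, lintegral_prod _ hFm.aemeasurable] at hfin
    have hae1 := ae_lt_top (hFm.lintegral_prod_right') hfin.ne
    have haeVξ : ∀ᵐ v : Fin n → ℂ, ∀ᵐ ξ : Fin n → ℂ, ∀ ζ : ℂ, h (v, ξ, ζ) = h (v, ξ, 0) := by
      filter_upwards [hae1] with v hv
      have hFv : Measurable fun w : (Fin n → ℂ) × ℂ =>
          ENNReal.ofReal (rhof n k ((v, w).1, (v, w).2.1)) *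
            (ENNReal.ofReal (cw (v, w).2.2) * (‖h (v, w)‖₊ : ENNReal) ^ 2) :=
        hFm.comp measurable_prodMk_left
      rw [Measure.volume_eq_prod, lintegral_prod _ hFv.aemeasurable] at hv
      have hae2 := ae_lt_top hFv.lintegral_prod_right' hv.ne
      filter_upwards [hae2] with ξ hξ
      have hinm : Measurable fun ζ : ℂ =>
          ENNReal.ofReal (cw ζ) * (‖h (v, ξ, ζ)‖₊ : ENNReal) ^ 2 := by
        have hm1 : Measurable fun ζ : ℂ => h (v, ξ, ζ) :=
          hc.measurable.comp (measurable_const.prodMk (measurable_const.prodMk measurable_id))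
        exact (cw_cont.measurable.ennreal_ofReal).mul
          ((hm1.nnnorm.coe_nnreal_ennreal).pow_const 2)
      have hξ2 : ENNReal.ofReal (rhof n k (v, ξ)) *
          (∫⁻ ζ : ℂ, ENNReal.ofReal (cw ζ) * (‖h (v, ξ, ζ)‖₊ : ENNReal) ^ 2 ∂volume) < ⊤ := by
        rw [← lintegral_const_mul _ hinm]
        exact hξ
      have hρne : ENNReal.ofReal (rhof n k (v, ξ)) ≠ 0 := by
        simp only [ne_eq, ENNReal.ofReal_eq_zero, not_le]
        exact rhof_pos n k hk (v, ξ)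
      have hfin2 : ∫⁻ ζ : ℂ, (‖h (v, ξ, ζ)‖₊ : ENNReal) ^ 2
          * ENNReal.ofReal (cw ζ) ∂volume ≠ ⊤ := by
        have hswap : ∫⁻ ζ : ℂ, (‖h (v, ξ, ζ)‖₊ : ENNReal) ^ 2 * ENNReal.ofReal (cw ζ) ∂volume
            = ∫⁻ ζ : ℂ, ENNReal.ofReal (cw ζ) * (‖h (v, ξ, ζ)‖₊ : ENNReal) ^ 2 ∂volume :=
          lintegral_congr fun ζ => mul_comm _ _
        rw [hswap]
        intro hcon
        rw [hcon, ENNReal.mul_top hρne] at hξ2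
        exact absurd hξ2 (lt_irrefl ⊤)
      have hslice : Differentiable ℂ fun ζ : ℂ => h (v, ξ, ζ) :=
        hdiff.comp ((differentiable_const v).prodMk
          ((differentiable_const ξ).prodMk differentiable_id))
      intro ζ
      exact liouville_L2 hslice hfin2 ζ
    intro v ξ ζ
    have step1 : ∀ᵐ v : Fin n → ℂ, ∀ ξ : Fin n → ℂ, h (v, ξ, ζ) = h (v, ξ, 0) := by
      filter_upwards [haeVξ] with v hv
      have heq : (fun ξ : Fin n → ℂ => h (v, ξ, ζ)) = fun ξ : Fin n → ℂ => h (v, ξ, 0) := by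
        refine (Continuous.ae_eq_iff_eq volume
          (hc.comp (continuous_const.prodMk (continuous_id.prodMk continuous_const)))
          (hc.comp (continuous_const.prodMk (continuous_id.prodMk continuous_const)))).1 ?_
        filter_upwards [hv] with ξ hξ using hξ ζ
      exact fun ξ => congrFun heq ξ
    have heq2 : (fun v : Fin n → ℂ => h (v, ξ, ζ)) = fun v : Fin n → ℂ => h (v, ξ, 0) := by
      refine (Continuous.ae_eq_iff_eq volume
        (hc.comp (continuous_id.prodMk (continuous_const.prodMk continuous_const)))
        (hc.comp (continuous_id.prodMk (continuous_const.prodMk continuous_const)))).1 ?_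
      filter_upwards [step1] with v hv using hv ξ
    exact congrFun heq2 v
  refine ⟨?_, ?_, ?_, fun F q => rfl⟩
  · -- part 1
    intro h hd hm
    have hhat : Differentiable ℂ fun q : SBSpace n => h (q.1, q.2, 0) :=
      hd.comp (differentiable_fst.prodMk (differentiable_snd.prodMk (differentiable_const 0)))
    have hGm : Measurable fun q : SBSpace n => (‖h (q.1, q.2, 0)‖₊ : ENNReal) ^ 2 :=
      (hhat.continuous.measurable.nnnorm.coe_nnreal_ennreal).pow_const 2
    have hlin := lintegral_tw n k hGm
    have hcongr : ∫⁻ p : TwSpace n, (‖h ((p.1, p.2.1).1, (p.1, p.2.1).2, 0)‖₊ : ENNReal) ^ 2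
        ∂(twMeasure n k) = ∫⁻ p, (‖h p‖₊ : ENNReal) ^ 2 ∂(twMeasure n k) := by
      apply lintegral_congr
      intro p
      rw [show h (p.1, p.2.1, 0) = h p from (part3 h hd hm p.1 p.2.1 p.2.2).symm]
    rw [hcongr] at hlin
    have hmem2 : MemLp (fun q : SBSpace n => h (q.1, q.2, 0)) 2 (sbMeasure n k) := by
      rw [memLp_two_iff_lintegral hhat.continuous.aestronglyMeasurable, ← hlin]
      exact (memLp_two_iff_lintegral hm.1).1 hm
    refine ⟨hhat, hmem2, ?_⟩
    rw [integral_norm_sq_eq_lintegral hmem2.1, integral_norm_sq_eq_lintegral hm.1, ← hlin]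
  · -- part 2
    intro F hd hm
    have hFtil : Differentiable ℂ fun p : TwSpace n => F (p.1, p.2.1) :=
      hd.comp (differentiable_fst.prodMk (differentiable_fst.comp differentiable_snd))
    have hGm : Measurable fun q : SBSpace n => (‖F q‖₊ : ENNReal) ^ 2 :=
      (hd.continuous.measurable.nnnorm.coe_nnreal_ennreal).pow_const 2
    have hlin := lintegral_tw n k hGm
    have hmem2 : MemLp (fun p : TwSpace n => F (p.1, p.2.1)) 2 (twMeasure n k) := by
      rw [memLp_two_iff_lintegral hFtil.continuous.aestronglyMeasurable, hlin]
      exact (memLp_two_iff_lintegral hm.1).1 hm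
    refine ⟨hFtil, hmem2, ?_⟩
    rw [integral_norm_sq_eq_lintegral hmem2.1, integral_norm_sq_eq_lintegral hm.1, hlin]
  · -- part 3
    intro h hd hm p
    exact (part3 h hd hm p.1 p.2.1 p.2.2).symm
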